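/- Every non-abelian CSA group is infinite; equivalently, no nontrivial finite group that is non-abelian is CSA. -/

import Mathlib

universe u

/-- A group is *CSA* if every maximal abelian subgroup `A` is malnormal:
for every `g ∉ A`, `A ⊓ gAg⁻¹ = ⊥`. -/
def IsCSA (G : Type u) [Group G] : Prop :=
  ∀ A : Subgroup G, Maximal (fun H : Subgroup G => IsMulCommutative H) A →
    ∀ g : G, g ∉ A → A ⊓ Subgroup.map (MulAut.conj g).toMonoidHom A = ⊥

section aux
variable {G : Type u} [Group G]

lemma mem_conj_map {g a : G} {A : Subgroup G} (ha : a ∈ A) :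
    g * a * g⁻¹ ∈ Subgroup.map (MulAut.conj g).toMonoidHom A :=
  ⟨a, ha, by simp⟩

lemma comm_of_mem {A : Subgroup G} (hA : IsMulCommutative A) {x y : G}
    (hx : x ∈ A) (hy : y ∈ A) : x * y = y * x := by
  have : IsMulCommutative A := hA
  exact Subgroup.mul_comm_of_mem_isMulCommutative (H := A) hx hy

lemma exists_maximal_comm [Finite G] (x : G) :
    ∃ A : Subgroup G, Maximal (fun H : Subgroup G => IsMulCommutative H) A ∧ x ∈ A := by
  classical
  have hfin : ({B : Subgroup G | IsMulCommutative B ∧ x ∈ B}).Finite := Set.toFinite _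
  have hne : ({B : Subgroup G | IsMulCommutative B ∧ x ∈ B}).Nonempty :=
    ⟨Subgroup.zpowers x, Subgroup.zpowers_isMulCommutative x, Subgroup.mem_zpowers x⟩
  obtain ⟨A, hAs, hmax⟩ := Set.Finite.exists_maximalFor id _ hfin hne
  refine ⟨A, ⟨hAs.1, ?_⟩, hAs.2⟩
  intro C hC hle
  have : A = C := le_antisymm hle (hmax (j := C) ⟨hC, hle hAs.2⟩ hle)
  exact this ▸ le_rfl
end aux

section aux2
variable {G : Type u} [Group G]

lemma key_mem (hcsa : IsCSA G) {A : Subgroup G} (hA : Maximal (fun H : Subgroup G => IsMulCommutative H) A)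
    {x g : G} (hx : x ∈ A) (hx1 : x ≠ 1)
    (hmem : x ∈ Subgroup.map (MulAut.conj g).toMonoidHom A) : g ∈ A := by
  by_contra hg
  have h := hcsa A hA g hg
  have : x ∈ A ⊓ Subgroup.map (MulAut.conj g).toMonoidHom A := ⟨hx, hmem⟩
  rw [h] at this
  exact hx1 (Subgroup.mem_bot.mp this)

lemma comm_map (g : G) {A : Subgroup G} (hA : IsMulCommutative A) :
    IsMulCommutative (Subgroup.map (MulAut.conj g).toMonoidHom A) := by
  constructor
  constructor
  rintro ⟨x, a, ha, rfl⟩ ⟨y, b, hb, rfl⟩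
  ext
  show (MulAut.conj g).toMonoidHom a * (MulAut.conj g).toMonoidHom b
      = (MulAut.conj g).toMonoidHom b * (MulAut.conj g).toMonoidHom a
  rw [← map_mul, ← map_mul, comm_of_mem hA ha hb]

lemma maximal_map (g : G) {A : Subgroup G} (hA : Maximal (fun H : Subgroup G => IsMulCommutative H) A) :
    Maximal (fun H : Subgroup G => IsMulCommutative H) (Subgroup.map (MulAut.conj g).toMonoidHom A) := by
  refine ⟨comm_map g hA.1, ?_⟩
  intro C hC hle
  have h1 : A ≤ Subgroup.map (MulAut.conj g⁻¹).toMonoidHom C := by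
    intro a ha
    refine ⟨g * a * g⁻¹, hle (mem_conj_map ha), ?_⟩
    simp [MulAut.conj_apply]
    group
  have h2 := hA.2 (comm_map g⁻¹ hC) h1
  intro x hx
  have hx' : g⁻¹ * x * g ∈ A := by
    refine h2 ⟨x, hx, ?_⟩
    simp [MulAut.conj_apply]
  refine ⟨g⁻¹ * x * g, hx', ?_⟩
  simp [MulAut.conj_apply]
  group

lemma conj_eq (hcsa : IsCSA G) {A : Subgroup G} (hA : Maximal (fun H : Subgroup G => IsMulCommutative H) A)
    {g g' a a' : G} (ha : a ∈ A) (ha' : a' ∈ A) (ha1 : a ≠ 1)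
    (heq : g * a * g⁻¹ = g' * a' * g'⁻¹) : g⁻¹ * g' ∈ A ∧ a = a' := by
  have hk : (g⁻¹ * g') * a' * (g⁻¹ * g')⁻¹ = a := by
    have : g⁻¹ * (g' * a' * g'⁻¹) * g = g⁻¹ * (g * a * g⁻¹) * g := by rw [heq]
    calc (g⁻¹ * g') * a' * (g⁻¹ * g')⁻¹ = g⁻¹ * (g' * a' * g'⁻¹) * g := by group
    _ = g⁻¹ * (g * a * g⁻¹) * g := this
    _ = a := by group
  have hkA : g⁻¹ * g' ∈ A := key_mem hcsa hA ha ha1 (hk ▸ mem_conj_map ha')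
  refine ⟨hkA, ?_⟩
  have hc := comm_of_mem hA.1 hkA ha'
  rw [← hk, hc]
  group
end aux2

section aux3
variable {G : Type u} [Group G]

lemma eq_of_common_mem (hcsa : IsCSA G) {A B : Subgroup G}
    (hA : Maximal (fun H : Subgroup G => IsMulCommutative H) A) (hB : Maximal (fun H : Subgroup G => IsMulCommutative H) B)
    {x : G} (hxA : x ∈ A) (hxB : x ∈ B) (hx1 : x ≠ 1) : A = B := by
  have h : ∀ (C D : Subgroup G), Maximal (fun H : Subgroup G => IsMulCommutative H) C →
      Maximal (fun H : Subgroup G => IsMulCommutative H) D → x ∈ C → x ∈ D → C ≤ D := by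
    intro C D hC hD hxC hxD c hc
    have hcx : c * x * c⁻¹ = x := by
      rw [comm_of_mem hC.1 hc hxC]; group
    exact key_mem hcsa hD hxD hx1 (hcx ▸ mem_conj_map hxD)
  exact le_antisymm (h A B hA hB hxA hxB) (h B A hB hA hxB hxA)

/-- conjugation map on the quotient: `(gA, a) ↦ g a g⁻¹`. -/
noncomputable def cf (A : Subgroup G) (hA : IsMulCommutative A)
    (p : (G ⧸ A) × {x : A // x ≠ 1}) : G :=
  Quotient.liftOn' p.1 (fun g => g * (p.2.1 : G) * g⁻¹) (by
    intro g g' h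
    rw [QuotientGroup.leftRel_apply] at h
    have hc := comm_of_mem hA h p.2.1.2
    calc g * (p.2.1 : G) * g⁻¹ = g * ((p.2.1 : G) * (g⁻¹ * g')) * g'⁻¹ := by group
    _ = g * ((g⁻¹ * g') * (p.2.1 : G)) * g'⁻¹ := by rw [hc]
    _ = g' * (p.2.1 : G) * g'⁻¹ := by group)

lemma cf_mk (A : Subgroup G) (hA : IsMulCommutative A) (g : G) (a : {x : A // x ≠ 1}) :
    cf A hA (QuotientGroup.mk g, a) = g * (a.1 : G) * g⁻¹ := rfl

lemma cf_ne_one (A : Subgroup G) (hA : IsMulCommutative A) (p : (G ⧸ A) × {x : A // x ≠ 1}) :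
    cf A hA p ≠ 1 := by
  obtain ⟨q, a⟩ := p
  obtain ⟨g, rfl⟩ := QuotientGroup.mk_surjective q
  rw [cf_mk]
  intro h
  have : (a.1 : G) = 1 := by
    have := congrArg (fun t => g⁻¹ * t * g) h
    simpa [mul_assoc] using this
  exact a.2 (by ext; simpa using this)

lemma cf_inj (hcsa : IsCSA G) {A : Subgroup G} (hA : Maximal (fun H : Subgroup G => IsMulCommutative H) A) :
    Function.Injective (cf A hA.1) := by
  rintro ⟨q, a⟩ ⟨q', a'⟩ h
  obtain ⟨g, rfl⟩ := QuotientGroup.mk_surjective q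
  obtain ⟨g', rfl⟩ := QuotientGroup.mk_surjective q'
  rw [cf_mk, cf_mk] at h
  have ha1 : (a.1 : G) ≠ 1 := fun hh => a.2 (by ext; simpa using hh)
  obtain ⟨hk, heq⟩ := conj_eq hcsa hA a.1.2 a'.1.2 ha1 h
  have hq : (QuotientGroup.mk g : G ⧸ A) = QuotientGroup.mk g' := by
    rw [QuotientGroup.eq]
    exact hk
  have ha : a = a' := by
    ext1; ext; exact heq
  rw [hq, ha]
end aux3

section main
variable {G : Type u} [Group G]

lemma card_ne_one (C : Subgroup G) [Finite G] :
    Nat.card {y : C // y ≠ 1} + 1 = Nat.card C := by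
  classical
  have e : ({y : C // y ≠ 1} ⊕ Unit) ≃ C :=
    (Equiv.optionEquivSumPUnit _).symm.trans (Equiv.optionSubtypeNe (1 : C))
  rw [← Nat.card_congr e, Nat.card_sum]
  simp

lemma card_pos_ne_one (C : Subgroup G) [Finite G] {x : G} (hx : x ∈ C) (hx1 : x ≠ 1) :
    1 ≤ Nat.card {y : C // y ≠ 1} := by
  have : Nonempty {y : C // y ≠ 1} :=
    ⟨⟨⟨x, hx⟩, fun h => hx1 (by simpa using congrArg Subtype.val h)⟩⟩
  exact Nat.card_pos

lemma lag (C : Subgroup G) [Finite G] :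
    Nat.card (G ⧸ C) * Nat.card C = Nat.card G := by
  have h := Subgroup.index_mul_card (H := C)
  rwa [Subgroup.index_eq_card] at h

end main

/-- Every non-abelian CSA group is infinite. -/
theorem stmt_3 (G : Type u) [Group G] (hcsa : IsCSA G)
    (hna : ∃ a b : G, a * b ≠ b * a) : Infinite G := by
  by_contra hinf
  have hfin : Finite G := not_infinite_iff_finite.mp hinf
  obtain ⟨a, b, hab⟩ := hna
  have ha1 : a ≠ 1 := by rintro rfl; simp at hab
  obtain ⟨A, hA, haA⟩ := exists_maximal_comm a
  have hAtop : A ≠ ⊤ := by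
    rintro rfl
    exact hab (comm_of_mem hA.1 (Subgroup.mem_top a) (Subgroup.mem_top b))
  have hN1 : 1 ≤ Nat.card G := Nat.card_pos
  have hqA1 : 1 ≤ Nat.card (G ⧸ A) := Nat.card_pos
  have lagA := lag A
  have hcardA := card_ne_one A
  have hposA := card_pos_ne_one A haA ha1
  have hdistA : Nat.card (G ⧸ A) * Nat.card {x : A // x ≠ 1} + Nat.card (G ⧸ A)
      = Nat.card G := by rw [← lagA, ← hcardA]; ring
  have hpA : Nat.card (G ⧸ A) ≤ Nat.card (G ⧸ A) * Nat.card {x : A // x ≠ 1} :=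
    Nat.le_mul_of_pos_right _ hposA
  by_cases hcov : ∀ x : G, x ≠ 1 → ∃ g : G, x ∈ Subgroup.map (MulAut.conj g).toMonoidHom A
  · -- covering case: A has index 1, so G is abelian, contradiction
    set F : Unit ⊕ ((G ⧸ A) × {x : A // x ≠ 1}) → G := fun p =>
      match p with
      | .inl _ => 1
      | .inr q => cf A hA.1 q with hF
    have hsurj : Function.Surjective F := by
      intro x
      by_cases hx : x = 1
      · exact ⟨.inl (), hx.symm⟩
      · obtain ⟨g, a', ha', hax⟩ := hcov x hx
        have ha'1 : a' ≠ 1 := by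
          rintro rfl; simp at hax; exact hx hax.symm
        refine ⟨.inr (QuotientGroup.mk g,
          ⟨⟨a', ha'⟩, fun h => ha'1 (by simpa using congrArg Subtype.val h)⟩), ?_⟩
        simp only [hF, cf_mk]
        simpa using hax
    have hle : Nat.card G ≤ 1 + Nat.card (G ⧸ A) * Nat.card {x : A // x ≠ 1} := by
      calc Nat.card G ≤ Nat.card (Unit ⊕ ((G ⧸ A) × {x : A // x ≠ 1})) :=
        Nat.card_le_card_of_surjective F hsurj
      _ = 1 + Nat.card (G ⧸ A) * Nat.card {x : A // x ≠ 1} := by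
        rw [Nat.card_sum, Nat.card_prod]; simp
    have hidx : Nat.card (G ⧸ A) = 1 := by omega
    have : A = ⊤ := Subgroup.index_eq_one.mp (by rw [Subgroup.index_eq_card]; exact hidx)
    exact hAtop this
  · push_neg at hcov
    obtain ⟨c, hc1, hc⟩ := hcov
    obtain ⟨B, hB, hcB⟩ := exists_maximal_comm c
    have lagB := lag B
    have hcardB := card_ne_one B
    have hposB := card_pos_ne_one B hcB hc1
    have hqB1 : 1 ≤ Nat.card (G ⧸ B) := Nat.card_pos
    have hdistB : Nat.card (G ⧸ B) * Nat.card {x : B // x ≠ 1} + Nat.card (G ⧸ B)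
        = Nat.card G := by rw [← lagB, ← hcardB]; ring
    have hpB : Nat.card (G ⧸ B) ≤ Nat.card (G ⧸ B) * Nat.card {x : B // x ≠ 1} :=
      Nat.le_mul_of_pos_right _ hposB
    set F : (Unit ⊕ ((G ⧸ A) × {x : A // x ≠ 1})) ⊕ ((G ⧸ B) × {x : B // x ≠ 1}) → G :=
      fun p =>
      match p with
      | .inl (.inl _) => 1
      | .inl (.inr q) => cf A hA.1 q
      | .inr q => cf B hB.1 q with hF
    have hcross : ∀ (p : (G ⧸ A) × {x : A // x ≠ 1}) (q : (G ⧸ B) × {x : B // x ≠ 1}),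
        cf A hA.1 p ≠ cf B hB.1 q := by
      rintro ⟨p1, a'⟩ ⟨q1, b'⟩ h
      obtain ⟨g, rfl⟩ := QuotientGroup.mk_surjective p1
      obtain ⟨h', rfl⟩ := QuotientGroup.mk_surjective q1
      rw [cf_mk, cf_mk] at h
      have hb : (h'⁻¹ * g) * (a'.1 : G) * (h'⁻¹ * g)⁻¹ = (b'.1 : G) := by
        calc (h'⁻¹ * g) * (a'.1 : G) * (h'⁻¹ * g)⁻¹
            = h'⁻¹ * (g * (a'.1 : G) * g⁻¹) * h' := by group
        _ = h'⁻¹ * (h' * (b'.1 : G) * h'⁻¹) * h' := by rw [h]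
        _ = (b'.1 : G) := by group
      have hb'1 : (b'.1 : G) ≠ 1 := fun hh => b'.2 (by ext; simpa using hh)
      have hmapmax := maximal_map (h'⁻¹ * g) hA
      have hBeq : B = Subgroup.map (MulAut.conj (h'⁻¹ * g)).toMonoidHom A :=
        eq_of_common_mem hcsa hB hmapmax b'.1.2 (hb ▸ mem_conj_map a'.1.2) hb'1
      exact hc (h'⁻¹ * g) (hBeq ▸ hcB)
    have hinj : Function.Injective F := by
      rintro ((u | p) | p) ((v | q) | q) h <;> simp only [hF] at h
      · rfl
      · exact absurd h.symm (cf_ne_one _ _ _)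
      · exact absurd h.symm (cf_ne_one _ _ _)
      · exact absurd h (cf_ne_one _ _ _)
      · rw [cf_inj hcsa hA h]
      · exact absurd h (hcross _ _)
      · exact absurd h (cf_ne_one _ _ _)
      · exact absurd h.symm (hcross _ _)
      · rw [cf_inj hcsa hB h]
    have hle : 1 + Nat.card (G ⧸ A) * Nat.card {x : A // x ≠ 1}
        + Nat.card (G ⧸ B) * Nat.card {x : B // x ≠ 1} ≤ Nat.card G := by
      calc 1 + Nat.card (G ⧸ A) * Nat.card {x : A // x ≠ 1}
          + Nat.card (G ⧸ B) * Nat.card {x : B // x ≠ 1}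
          = Nat.card ((Unit ⊕ ((G ⧸ A) × {x : A // x ≠ 1}))
              ⊕ ((G ⧸ B) × {x : B // x ≠ 1})) := by
            rw [Nat.card_sum, Nat.card_sum, Nat.card_prod, Nat.card_prod]; simp
      _ ≤ Nat.card G := Nat.card_le_card_of_injective F hinj
    omega
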